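/- For fixed c₁ < c₂ < c₃ and y₁ > y₂, the function φ : ℝ → ℝ defined by φ(k) = (y₂ − y₁)·(e^{k c₃} − e^{k c₁})/(e^{k c₂} − e^{k c₁}) + y₁ for k ≠ 0 and φ(0) = (y₂ − y₁)(c₃ − c₁)/(c₂ − c₁) + y₁ is continuous, strictly decreasing, tends to y₂ as k → −∞ and to −∞ as k → +∞; consequently φ is a bijection from ℝ onto (−∞, y₂). -/

import Mathlib

open Real Set Filter Topology

noncomputable def hAux (r : ℝ) : ℝ → ℝ :=
  fun u => if u = 1 then r else (u ^ r - 1) / (u - 1)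

lemma hAux_ne_one {r u : ℝ} (hu : u ≠ 1) : hAux r u = (u ^ r - 1) / (u - 1) := if_neg hu

lemma hAux_one (r : ℝ) : hAux r 1 = r := if_pos rfl

lemma secant_core {r : ℝ} (hr : 1 < r) {x y : ℝ} (hx : 0 < x) (hy : 0 < y)
    (hx1 : x ≠ 1) (hy1 : y ≠ 1) (hxy : x < y) :
    (x ^ r - 1) / (x - 1) < (y ^ r - 1) / (y - 1) := by
  have := (strictConvexOn_rpow hr).secant_strict_mono
    (a := 1) (x := x) (y := y) (by norm_num) hx.le hy.le hx1 hy1 hxy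
  simpa [Real.one_rpow] using this

lemma tendsto_slope_aux {r : ℝ} (hr : 1 < r) :
    Tendsto (fun u : ℝ => (u ^ r - 1) / (u - 1)) (𝓝[≠] 1) (𝓝 r) := by
  have hd : HasDerivAt (fun u : ℝ => u ^ r) (r * (1 : ℝ) ^ (r - 1)) 1 :=
    Real.hasDerivAt_rpow_const (Or.inl one_ne_zero)
  rw [Real.one_rpow, mul_one, hasDerivAt_iff_tendsto_slope] at hd
  refine hd.congr' ?_
  filter_upwards [self_mem_nhdsWithin] with u hu
  rw [slope_def_field, Real.one_rpow]

lemma hAux_lt_r {r : ℝ} (hr : 1 < r) {x : ℝ} (hx : 0 < x) (hx1 : x < 1) :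
    hAux r x < r := by
  set m : ℝ := (x + 1) / 2 with hm
  have hxm : x < m := by rw [hm]; linarith
  have hm1 : m < 1 := by rw [hm]; linarith
  have hm0 : 0 < m := by rw [hm]; linarith
  have h1 : (x ^ r - 1) / (x - 1) < (m ^ r - 1) / (m - 1) :=
    secant_core hr hx hm0 hx1.ne hm1.ne hxm
  have hne : NeBot (𝓝[Ioo m 1] (1 : ℝ)) := by
    rw [← mem_closure_iff_nhdsWithin_neBot, closure_Ioo hm1.ne]
    exact right_mem_Icc.2 hm1.le
  have hsub : Ioo m 1 ⊆ ({1} : Set ℝ)ᶜ := fun u hu => hu.2.ne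
  have h2 : (m ^ r - 1) / (m - 1) ≤ r := by
    refine ge_of_tendsto ((tendsto_slope_aux hr).mono_left
      (nhdsWithin_mono (1 : ℝ) hsub)) ?_
    filter_upwards [self_mem_nhdsWithin] with u (hu : u ∈ Ioo m 1)
    exact (secant_core hr hm0 (hm0.trans hu.1) hm1.ne hu.2.ne hu.1).le
  rw [hAux_ne_one hx1.ne]
  linarith

lemma r_lt_hAux {r : ℝ} (hr : 1 < r) {y : ℝ} (hy : 1 < y) :
    r < hAux r y := by
  set m : ℝ := (1 + y) / 2 with hm
  have h1m : 1 < m := by rw [hm]; linarith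
  have hmy : m < y := by rw [hm]; linarith
  have h1 : (m ^ r - 1) / (m - 1) < (y ^ r - 1) / (y - 1) :=
    secant_core hr (by linarith) (by linarith) h1m.ne' hy.ne' hmy
  have hne : NeBot (𝓝[Ioo 1 m] (1 : ℝ)) := by
    rw [← mem_closure_iff_nhdsWithin_neBot, closure_Ioo h1m.ne]
    exact left_mem_Icc.2 h1m.le
  have hsub : Ioo 1 m ⊆ ({1} : Set ℝ)ᶜ := fun u hu => hu.1.ne'
  have h2 : r ≤ (m ^ r - 1) / (m - 1) := by
    refine le_of_tendsto ((tendsto_slope_aux hr).mono_left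
      (nhdsWithin_mono (1 : ℝ) hsub)) ?_
    filter_upwards [self_mem_nhdsWithin] with u (hu : u ∈ Ioo 1 m)
    exact (secant_core hr (by linarith [hu.1]) (by linarith) hu.1.ne' h1m.ne' hu.2).le
  rw [hAux_ne_one hy.ne']
  linarith

lemma hAux_strictMonoOn {r : ℝ} (hr : 1 < r) : StrictMonoOn (hAux r) (Ioi 0) := by
  intro x hx y hy hxy
  rcases eq_or_ne x 1 with rfl | hx1
  · rw [hAux_one]; exact r_lt_hAux hr hxy
  rcases eq_or_ne y 1 with rfl | hy1
  · rw [hAux_one]; exact hAux_lt_r hr hx hxy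
  · rw [hAux_ne_one hx1, hAux_ne_one hy1]
    exact secant_core hr hx hy hx1 hy1 hxy

lemma hAux_continuousAt {r : ℝ} (hr : 1 < r) {x : ℝ} (hx : 0 < x) :
    ContinuousAt (hAux r) x := by
  rcases eq_or_ne x 1 with rfl | hx1
  · have : Tendsto (hAux r) (𝓝 1) (𝓝 r) := by
      rw [← nhdsNE_sup_pure (1 : ℝ), tendsto_sup]
      constructor
      · refine (tendsto_slope_aux hr).congr' ?_
        filter_upwards [self_mem_nhdsWithin] with u hu
        exact (hAux_ne_one hu).symm
      · have : hAux r 1 = r := hAux_one r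
        simpa [this] using (tendsto_pure_nhds (hAux r) 1)
    simpa [ContinuousAt, hAux_one] using this
  · have hc : ContinuousAt (fun u : ℝ => (u ^ r - 1) / (u - 1)) x := by
      exact ((Real.continuousAt_rpow_const x r (Or.inl hx.ne')).sub
        continuousAt_const).div ((continuousAt_id).sub continuousAt_const)
        (sub_ne_zero.2 hx1)
    refine hc.congr ?_
    filter_upwards [eventually_ne_nhds hx1] with u hu
    exact (hAux_ne_one hu).symm

lemma hAux_tendsto_zero {r : ℝ} (hr : 1 < r) :
    Tendsto (hAux r) (𝓝[>] (0 : ℝ)) (𝓝 1) := by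
  have hc : ContinuousAt (fun u : ℝ => (u ^ r - 1) / (u - 1)) 0 := by
    exact ((Real.continuousAt_rpow_const 0 r (Or.inr (by linarith))).sub
      continuousAt_const).div ((continuousAt_id).sub continuousAt_const) (by norm_num)
  have h0 : ((0 : ℝ) ^ r - 1) / ((0 : ℝ) - 1) = 1 := by
    rw [Real.zero_rpow (by linarith : r ≠ 0)]; norm_num
  have := hc.tendsto.mono_left (nhdsWithin_le_nhds (s := Ioi (0 : ℝ)))
  rw [h0] at this
  refine this.congr' ?_
  filter_upwards [Ioo_mem_nhdsGT_of_mem (show (0:ℝ) ∈ Ico (0:ℝ) 1 by norm_num)] with u hu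
  exact (hAux_ne_one hu.2.ne).symm

lemma hAux_tendsto_atTop {r : ℝ} (hr : 1 < r) : Tendsto (hAux r) atTop atTop := by
  refine tendsto_atTop_mono' atTop ?_ (tendsto_rpow_atTop (by linarith : 0 < r - 1))
  filter_upwards [eventually_gt_atTop (1 : ℝ)] with u hu
  rw [hAux_ne_one hu.ne']
  have h1 : (1 : ℝ) ≤ u ^ (r - 1) := Real.one_le_rpow hu.le (by linarith)
  rw [le_div_iff₀ (by linarith : (0:ℝ) < u - 1)]
  have h2 : u ^ (r - 1) * u = u ^ r := by
    rw [← Real.rpow_add_one (by positivity : u ≠ 0) (r - 1)]; ring_nf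
  nlinarith

theorem stmt_8 (c₁ c₂ c₃ y₁ y₂ : ℝ)
    (hc12 : c₁ < c₂) (hc23 : c₂ < c₃) (hy : y₁ > y₂)
    (φ : ℝ → ℝ)
    (hφ : φ = fun k => if k = 0 then (y₂ - y₁) * (c₃ - c₁) / (c₂ - c₁) + y₁
      else (y₂ - y₁) * (Real.exp (k * c₃) - Real.exp (k * c₁)) /
        (Real.exp (k * c₂) - Real.exp (k * c₁)) + y₁) :
    Continuous φ ∧ StrictAnti φ ∧
      Filter.Tendsto φ Filter.atBot (nhds y₂) ∧
      Filter.Tendsto φ Filter.atTop Filter.atBot ∧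
      Set.BijOn φ Set.univ (Set.Iio y₂) := by
  have hb : (0 : ℝ) < c₂ - c₁ := by linarith
  have ha : (0 : ℝ) < c₃ - c₁ := by linarith
  set r : ℝ := (c₃ - c₁) / (c₂ - c₁) with hrdef
  have hr : 1 < r := (one_lt_div hb).2 (by linarith)
  have hyneg : y₂ - y₁ < 0 := by linarith
  -- key formula
  have hφk : ∀ k : ℝ, φ k = (y₂ - y₁) * hAux r (Real.exp (k * (c₂ - c₁))) + y₁ := by
    intro k
    rcases eq_or_ne k 0 with rfl | hk
    · rw [hφ]
      show (if (0:ℝ) = 0 then (y₂ - y₁) * (c₃ - c₁) / (c₂ - c₁) + y₁ else _) = _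
      rw [if_pos rfl, zero_mul, Real.exp_zero, hAux_one, hrdef, mul_div_assoc]
    · have hu1 : Real.exp (k * (c₂ - c₁)) ≠ 1 := by
        rw [Ne, Real.exp_eq_one_iff]
        exact mul_ne_zero hk (by linarith)
      have hur : Real.exp (k * (c₂ - c₁)) ^ r = Real.exp (k * (c₃ - c₁)) := by
        rw [Real.rpow_def_of_pos (Real.exp_pos _), Real.log_exp, hrdef]
        congr 1
        field_simp [hb.ne']
      have e1 : Real.exp (k * c₃) - Real.exp (k * c₁) =
          (Real.exp (k * (c₃ - c₁)) - 1) * Real.exp (k * c₁) := by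
        rw [sub_mul, one_mul, ← Real.exp_add]
        congr 2
        ring
      have e2 : Real.exp (k * c₂) - Real.exp (k * c₁) =
          (Real.exp (k * (c₂ - c₁)) - 1) * Real.exp (k * c₁) := by
        rw [sub_mul, one_mul, ← Real.exp_add]
        congr 2
        ring
      have key : (Real.exp (k * c₃) - Real.exp (k * c₁)) /
          (Real.exp (k * c₂) - Real.exp (k * c₁)) = hAux r (Real.exp (k * (c₂ - c₁))) := by
        rw [hAux_ne_one hu1, hur, e1, e2,
          mul_div_mul_right _ _ (Real.exp_pos (k * c₁)).ne']
      rw [hφ]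
      simp only [if_neg hk]
      rw [mul_div_assoc, key]
  have hφ' : φ = fun k => (y₂ - y₁) * hAux r (Real.exp (k * (c₂ - c₁))) + y₁ := funext hφk
  have hexp : Continuous fun k : ℝ => Real.exp (k * (c₂ - c₁)) :=
    Real.continuous_exp.comp (continuous_id.mul continuous_const)
  -- continuity
  have hcont : Continuous φ := by
    rw [hφ']
    refine (continuous_const.mul ?_).add continuous_const
    rw [continuous_iff_continuousAt]
    intro k
    have : ContinuousAt (hAux r ∘ fun k : ℝ => Real.exp (k * (c₂ - c₁))) k :=
      ContinuousAt.comp (hAux_continuousAt hr (Real.exp_pos _)) hexp.continuousAt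
    exact this
  -- strict anti
  have hanti : StrictAnti φ := by
    intro k₁ k₂ hk
    rw [hφk, hφk]
    have hmono : hAux r (Real.exp (k₁ * (c₂ - c₁))) < hAux r (Real.exp (k₂ * (c₂ - c₁))) := by
      refine hAux_strictMonoOn hr (Real.exp_pos _) (Real.exp_pos _) ?_
      exact Real.exp_lt_exp.2 (by nlinarith)
    have := mul_lt_mul_of_neg_left hmono hyneg
    linarith
  -- tendsto atBot y₂
  have hbot : Tendsto φ atBot (𝓝 y₂) := by
    rw [hφ']
    have h1 : Tendsto (fun k : ℝ => Real.exp (k * (c₂ - c₁))) atBot (𝓝[>] (0:ℝ)) := by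
      rw [tendsto_nhdsWithin_iff]
      constructor
      · exact Real.tendsto_exp_atBot.comp (tendsto_id.atBot_mul_const hb)
      · exact Eventually.of_forall fun k => Real.exp_pos _
    have h2 : Tendsto (fun k : ℝ => hAux r (Real.exp (k * (c₂ - c₁)))) atBot (𝓝 1) :=
      (hAux_tendsto_zero hr).comp h1
    have h3 := (h2.const_mul (y₂ - y₁)).add_const y₁
    simpa using h3
  -- tendsto atTop atBot
  have htop : Tendsto φ atTop atBot := by
    rw [hφ']
    have h1 : Tendsto (fun k : ℝ => Real.exp (k * (c₂ - c₁))) atTop atTop :=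
      Real.tendsto_exp_atTop.comp (tendsto_id.atTop_mul_const hb)
    have h2 : Tendsto (fun k : ℝ => hAux r (Real.exp (k * (c₂ - c₁)))) atTop atTop :=
      (hAux_tendsto_atTop hr).comp h1
    have h3 : Tendsto (fun k : ℝ => (y₂ - y₁) * hAux r (Real.exp (k * (c₂ - c₁)))) atTop atBot :=
      (tendsto_const_mul_atBot_of_neg hyneg).2 h2
    exact tendsto_atBot_add_const_right _ y₁ h3
  refine ⟨hcont, hanti, hbot, htop, ?_, ?_, ?_⟩
  · -- MapsTo
    intro k _
    have h1 : φ k < φ (k - 1) := hanti (by linarith)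
    have h2 : φ (k - 1) ≤ y₂ := by
      refine ge_of_tendsto hbot ?_
      filter_upwards [eventually_le_atBot (k - 1)] with t ht
      exact hanti.antitone ht
    exact lt_of_lt_of_le h1 h2
  · exact hanti.injective.injOn
  · -- SurjOn
    intro y hy'
    have hy' : y < y₂ := hy'
    obtain ⟨t₂, ht₂⟩ := (hbot.eventually (eventually_gt_nhds hy')).exists
    obtain ⟨t₁, ht₁⟩ := (htop.eventually (eventually_le_atBot (y - 1))).exists
    have hmem : y ∈ Set.uIcc (φ t₁) (φ t₂) :=
      Set.Icc_subset_uIcc ⟨by linarith, ht₂.le⟩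
    obtain ⟨x, _, hx⟩ := intermediate_value_uIcc hcont.continuousOn hmem
    exact ⟨x, trivial, hx⟩
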